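/- Let X and Y be nonnegative random variables with positively decreasing distributions F and G, which are strongly asymptotically independent: P[X > x, Y > y] ~ C·F̄(x)·Ḡ(y) as x,y → ∞ for some constant C > 0. Then the distribution of min(X,Y), whose tail is P[X > x, Y > x], is positively decreasing. -/

import Mathlib

open Filter MeasureTheory

/-- Tail of (the distribution of) a random variable `X`. -/
noncomputable def rtail {Ω : Type*} [MeasurableSpace Ω] (μ : Measure Ω) (X : Ω → ℝ) (x : ℝ) : ℝ :=
  (μ {ω | x < X ω}).toReal

/-- The positively decreasing class `𝒫𝒟`. -/
def PosDec (T : ℝ → ℝ) : Prop :=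
  ∀ v : ℝ, 1 < v → limsup (fun x => T (v * x) / T x) atTop < 1

/-- The generalized long-tailed class `𝒪ℒ`. -/
def GenLong (T : ℝ → ℝ) : Prop :=
  ∀ t : ℝ, t ≠ 0 → IsBoundedUnder (· ≤ ·) atTop (fun x => T (x - t) / T x)

/-- The long-tailed class `ℒ`. -/
def LongTailed (T : ℝ → ℝ) : Prop :=
  ∀ t : ℝ, Tendsto (fun x => T (x - t) / T x) atTop (nhds 1)

/-- The dominatedly varying class `𝒟`. -/
def DomVar (T : ℝ → ℝ) : Prop :=
  ∀ b : ℝ, 0 < b → b < 1 → IsBoundedUnder (· ≤ ·) atTop (fun x => T (b * x) / T x)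

/-- Strong asymptotic independence with constant `C`:
`P[X > x, Y > y] ~ C ⋅ F̄(x) ⋅ Ḡ(y)` as `(x, y) → (∞, ∞)`. -/
def SAI {Ω : Type*} [MeasurableSpace Ω] (μ : Measure Ω) (X Y : Ω → ℝ) (C : ℝ) : Prop :=
  Tendsto
    (fun p : ℝ × ℝ =>
      (μ {ω | p.1 < X ω ∧ p.2 < Y ω}).toReal / (rtail μ X p.1 * rtail μ Y p.2))
    (atTop ×ˢ atTop) (nhds C)

lemma rtail_antitone {Ω : Type*} [MeasurableSpace Ω] (μ : Measure Ω) [IsProbabilityMeasure μ]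
    (X : Ω → ℝ) : Antitone (rtail μ X) := by
  intro x y hxy
  unfold rtail
  refine ENNReal.toReal_mono (measure_ne_top μ _) (measure_mono ?_)
  intro ω hω
  exact lt_of_le_of_lt hxy hω

theorem stmt3 {Ω : Type*} [MeasurableSpace Ω] (μ : Measure Ω) [IsProbabilityMeasure μ]
    (X Y : Ω → ℝ) (hX : ∀ ω, 0 ≤ X ω) (hY : ∀ ω, 0 ≤ Y ω)
    (C : ℝ) (hC : 0 < C) (hSAI : SAI μ X Y C)
    (hF : PosDec (rtail μ X)) (hG : PosDec (rtail μ Y)) :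
    PosDec (rtail μ (fun ω => min (X ω) (Y ω))) := by
  set F := rtail μ X with hFdef
  set G := rtail μ Y with hGdef
  set M := rtail μ (fun ω => min (X ω) (Y ω)) with hMdef
  have hFn : ∀ x, 0 ≤ F x := fun x => ENNReal.toReal_nonneg
  have hGn : ∀ x, 0 ≤ G x := fun x => ENNReal.toReal_nonneg
  have hMn : ∀ x, 0 ≤ M x := fun x => ENNReal.toReal_nonneg
  have hMeq : ∀ x, M x = (μ {ω | x < X ω ∧ x < Y ω}).toReal := by
    intro x; simp only [hMdef, rtail, lt_min_iff]
  set r : ℝ → ℝ := fun x => M x / (F x * G x) with hrdef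
  have hr : Tendsto r atTop (nhds C) := by
    have hdiag : Tendsto (fun x : ℝ => (x, x)) atTop (atTop ×ˢ atTop) :=
      tendsto_id.prodMk tendsto_id
    have := hSAI.comp hdiag
    simpa only [Function.comp_def, hrdef, hMeq] using this
  -- eventual positivity
  have hpos : ∀ᶠ x in atTop, 0 < M x ∧ 0 < F x ∧ 0 < G x := by
    have h2 : ∀ᶠ x in atTop, C / 2 < r x :=
      hr.eventually (eventually_gt_nhds (half_lt_self hC))
    filter_upwards [h2] with x hx
    have hrx : 0 < r x := lt_of_le_of_lt (by positivity) hx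
    have hd : F x * G x ≠ 0 := by
      intro h; rw [hrdef] at hrx; simp [h] at hrx
    have hdpos : 0 < F x * G x := lt_of_le_of_ne (mul_nonneg (hFn x) (hGn x)) (Ne.symm hd)
    have hMpos : 0 < M x := by
      have := (div_pos_iff.mp hrx)
      rcases this with ⟨h1, _⟩ | ⟨_, h2'⟩
      · exact h1
      · linarith
    refine ⟨hMpos, ?_, ?_⟩
    · rcases (mul_pos_iff.mp hdpos) with ⟨h1, _⟩ | ⟨h1, _⟩
      · exact h1
      · exact absurd h1 (not_lt.mpr (hFn x))
    · rcases (mul_pos_iff.mp hdpos) with ⟨_, h1⟩ | ⟨_, h1⟩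
      · exact h1
      · exact absurd h1 (not_lt.mpr (hGn x))
  intro v hv
  have hv0 : 0 < v := lt_trans one_pos hv
  have hmul : Tendsto (fun x : ℝ => v * x) atTop atTop :=
    Tendsto.const_mul_atTop hv0 tendsto_id
  -- r(vx)/r(x) → 1
  have hrr : Tendsto (fun x => r (v * x) / r x) atTop (nhds 1) := by
    have := (hr.comp hmul).div hr hC.ne'
    simpa [div_self hC.ne', Function.comp_def, Pi.div_def] using this
  -- bounds for F and G ratios
  have hFratio_le1 : ∀ᶠ x in atTop, F (v * x) / F x ≤ 1 := by
    filter_upwards [hpos, eventually_ge_atTop (0 : ℝ)] with x hx hx0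
    have : F (v * x) ≤ F x := rtail_antitone μ X (le_mul_of_one_le_left hx0 hv.le)
    exact div_le_one_of_le₀ this (hFn x)
  have hGratio_le1 : ∀ᶠ x in atTop, G (v * x) / G x ≤ 1 := by
    filter_upwards [hpos, eventually_ge_atTop (0 : ℝ)] with x hx hx0
    have : G (v * x) ≤ G x := rtail_antitone μ Y (le_mul_of_one_le_left hx0 hv.le)
    exact div_le_one_of_le₀ this (hGn x)
  have hFbdd : IsBoundedUnder (· ≤ ·) atTop (fun x => F (v * x) / F x) :=
    ⟨1, eventually_map.2 hFratio_le1⟩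
  have hGbdd : IsBoundedUnder (· ≤ ·) atTop (fun x => G (v * x) / G x) :=
    ⟨1, eventually_map.2 hGratio_le1⟩
  set LF := limsup (fun x => F (v * x) / F x) atTop with hLF
  set LG := limsup (fun x => G (v * x) / G x) atTop with hLG
  have hLF1 : LF < 1 := hF v hv
  have hLG1 : LG < 1 := hG v hv
  set a : ℝ := (max LF 0 + 1) / 2 with ha
  set b : ℝ := (max LG 0 + 1) / 2 with hb
  have ha0 : 0 < a := by
    have : (0:ℝ) ≤ max LF 0 := le_max_right _ _
    rw [ha]; linarith
  have ha1 : a < 1 := by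
    have : max LF 0 < 1 := max_lt hLF1 one_pos
    rw [ha]; linarith
  have haLF : LF < a := by
    have h1 : LF ≤ max LF 0 := le_max_left _ _
    have : max LF 0 < a := by
      have : max LF 0 < 1 := max_lt hLF1 one_pos
      rw [ha]; linarith
    linarith
  have hb0 : 0 < b := by
    have : (0:ℝ) ≤ max LG 0 := le_max_right _ _
    rw [hb]; linarith
  have hb1 : b < 1 := by
    have : max LG 0 < 1 := max_lt hLG1 one_pos
    rw [hb]; linarith
  have hbLG : LG < b := by
    have h1 : LG ≤ max LG 0 := le_max_left _ _
    have : max LG 0 < b := by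
      have : max LG 0 < 1 := max_lt hLG1 one_pos
      rw [hb]; linarith
    linarith
  have hFa : ∀ᶠ x in atTop, F (v * x) / F x ≤ a :=
    (eventually_lt_of_limsup_lt haLF hFbdd).mono fun x hx => hx.le
  have hGb : ∀ᶠ x in atTop, G (v * x) / G x ≤ b :=
    (eventually_lt_of_limsup_lt hbLG hGbdd).mono fun x hx => hx.le
  set s : ℝ := a * b with hs
  have hs0 : 0 < s := mul_pos ha0 hb0
  have hs1 : s < 1 := by
    calc a * b ≤ 1 * b := by nlinarith
    _ < 1 := by linarith [one_mul b]
  have hkgt : (1:ℝ) < (1 + s) / (2 * s) := by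
    rw [lt_div_iff₀ (by linarith)]; linarith
  have hrk : ∀ᶠ x in atTop, r (v * x) / r x ≤ (1 + s) / (2 * s) := by
    have := hrr.eventually (eventually_le_nhds hkgt)
    exact this
  -- combine
  have hposv : ∀ᶠ x in atTop, 0 < M (v * x) ∧ 0 < F (v * x) ∧ 0 < G (v * x) :=
    hmul.eventually hpos
  have hkey : ∀ᶠ x in atTop, M (v * x) / M x ≤ (1 + s) / 2 := by
    filter_upwards [hpos, hposv, hFa, hGb, hrk] with x hx hxv hfa hgb hrkx
    obtain ⟨hM1, hF1, hG1⟩ := hx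
    obtain ⟨hM2, hF2, hG2⟩ := hxv
    have hid : M (v * x) / M x =
        (r (v * x) / r x) * ((F (v * x) / F x) * (G (v * x) / G x)) := by
      rw [hrdef]
      field_simp
    rw [hid]
    have hnn1 : 0 ≤ F (v * x) / F x := div_nonneg (hFn _) (hFn _)
    have hnn2 : 0 ≤ G (v * x) / G x := div_nonneg (hGn _) (hGn _)
    have hnnr : 0 ≤ r (v * x) / r x := by
      apply div_nonneg <;> · rw [hrdef]; positivity
    have hFG : (F (v * x) / F x) * (G (v * x) / G x) ≤ s := by
      rw [hs]; exact mul_le_mul hfa hgb hnn2 ha0.le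
    calc (r (v * x) / r x) * ((F (v * x) / F x) * (G (v * x) / G x))
        ≤ ((1 + s) / (2 * s)) * s := by
          apply mul_le_mul hrkx hFG (mul_nonneg hnn1 hnn2) (by positivity)
      _ = (1 + s) / 2 := by field_simp
  have hcob : IsCoboundedUnder (· ≤ ·) atTop (fun x => M (v * x) / M x) := by
    apply isCoboundedUnder_le_of_eventually_le atTop (x := 0)
    filter_upwards with x
    exact div_nonneg (hMn _) (hMn _)
  calc limsup (fun x => M (v * x) / M x) atTop ≤ (1 + s) / 2 :=
        limsup_le_of_le hcob hkey
    _ < 1 := by linarith
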